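/- (Elliptic partial fraction expansion) Let 0 < |p| < 1, let n ≥ 1, and let a₁,…,a_n, b₁,…,b_{n+1}, t be nonzero complex numbers subject to the balancing condition a₁⋯a_n · t = b₁⋯b_{n+1}, and assume a_i/t ∉ p^ℤ for all i, a_i/a_s ∉ p^ℤ for i ≠ s, and b_{n+1}/t ∉ p^ℤ. Then ∏_{s=1}^n θ_p(b_s/t)/θ_p(a_s/t) = (1/θ_p(b_{n+1}/t)) · ∑_{i=1}^n [ θ_p(a_i/b_{n+1})/θ_p(a_i/t) ] · [ ∏_{s=1}^n θ_p(a_i/b_s) ] / [ ∏_{s=1, s≠i}^n θ_p(a_i/a_s) ]. -/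

import Mathlib

open Complex Finset Filter Topology Metric Asymptotics

/-- The infinite `q`-Pochhammer symbol `(x; p)_∞ = ∏_{n≥0} (1 − x pⁿ)`. -/
noncomputable def pochInf (p x : ℂ) : ℂ := ∏' n : ℕ, (1 - x * p ^ n)

/-- Jacobi's odd theta function `θ_p(x) = (x; p)_∞ (p/x; p)_∞`. -/
noncomputable def theta (p x : ℂ) : ℂ := pochInf p x * pochInf p (p / x)

set_option maxHeartbeats 1000000

namespace EPF

variable {p : ℂ}

lemma hasProd_zero_of_eq_zero {f : ℕ → ℂ} (N : ℕ) (h : f N = 0) : HasProd f 0 := by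
  have hev : (fun s : Finset ℕ => ∏ i ∈ s, f i) =ᶠ[atTop] fun _ => 0 :=
    eventually_atTop.2 ⟨{N}, fun s hs =>
      Finset.prod_eq_zero (hs (Finset.mem_singleton_self N)) h⟩
  exact Tendsto.congr' hev.symm tendsto_const_nhds

lemma cexp_tsum_eq_tprod' {f : ℕ → ℂ} (hfn : ∀ n, f n ≠ 0)
    (hs : Summable fun n => Complex.log (f n)) :
    Complex.exp (∑' n, Complex.log (f n)) = ∏' n, f n := by
  exact Complex.cexp_tsum_eq_tprod hfn hs

lemma summable_log_core (hp1 : ‖p‖ < 1) (x : ℂ) (N : ℕ)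
    (hsmall : ‖x‖ * ‖p‖ ^ N ≤ 1 / 2) :
    Summable fun m : ℕ => Complex.log (1 - x * p ^ (m + N)) := by
  have hb : ∀ m : ℕ, ‖x * p ^ (m + N)‖ ≤ 1/2 * ‖p‖ ^ m := by
    intro m
    rw [norm_mul, norm_pow, pow_add, mul_comm (‖p‖^m)]
    rw [← mul_assoc]
    exact mul_le_mul_of_nonneg_right hsmall (by positivity)
  have hsum : Summable fun m : ℕ => (3/2 : ℝ) * (1/2 * ‖p‖ ^ m) := by
    apply Summable.mul_left
    apply Summable.mul_left
    exact summable_geometric_of_lt_one (norm_nonneg p) (by simpa using hp1)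
  apply Summable.of_norm_bounded hsum
  intro m
  have h1 : ‖-(x * p ^ (m + N))‖ ≤ 1/2 := by
    rw [norm_neg]; exact (hb m).trans (by
      have : ‖p‖ ^ m ≤ 1 := pow_le_one₀ (norm_nonneg p) (le_of_lt (by simpa using hp1))
      nlinarith)
  calc ‖Complex.log (1 - x * p ^ (m + N))‖
      = ‖Complex.log (1 + -(x * p ^ (m + N)))‖ := by rw [sub_eq_add_neg]
    _ ≤ 3/2 * ‖-(x * p ^ (m + N))‖ := Complex.norm_log_one_add_half_le_self h1
    _ ≤ 3/2 * (1/2 * ‖p‖ ^ m) := by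
        have hb' : ‖-(x * p ^ (m + N))‖ ≤ 1/2 * ‖p‖ ^ m := by rw [norm_neg]; exact hb m
        exact mul_le_mul_of_nonneg_left hb' (by norm_num)

lemma exists_small (hp1 : ‖p‖ < 1) (R : ℝ) (hR : 0 < R) :
    ∃ N : ℕ, R * ‖p‖ ^ N ≤ 1 / 2 := by
  obtain ⟨N, hN⟩ := exists_pow_lt_of_lt_one (show (0:ℝ) < (1/2)/R by positivity)
    (show ‖p‖ < 1 by simpa using hp1)
  exact ⟨N, by rw [mul_comm]; exact le_of_lt ((lt_div_iff₀ hR).mp hN)⟩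

lemma summable_log (hp1 : ‖p‖ < 1) (x : ℂ) :
    Summable fun n : ℕ => Complex.log (1 - x * p ^ n) := by
  obtain ⟨N, hN⟩ := exists_small hp1 (‖x‖ + 1) (by positivity)
  have hsmall : ‖x‖ * ‖p‖ ^ N ≤ 1/2 := by
    calc ‖x‖ * ‖p‖ ^ N ≤ (‖x‖ + 1) * ‖p‖ ^ N := by gcongr; linarith
      _ ≤ 1/2 := hN
  exact (summable_nat_add_iff N).mp (summable_log_core hp1 x N hsmall)

lemma multipliable_poch (hp1 : ‖p‖ < 1) (x : ℂ) :
    Multipliable fun n : ℕ => 1 - x * p ^ n := by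
  by_cases h : ∀ n : ℕ, 1 - x * p ^ n ≠ 0
  · exact Complex.multipliable_of_summable_log (summable_log hp1 x)
  · push_neg at h
    obtain ⟨N, hN⟩ := h
    exact ⟨0, hasProd_zero_of_eq_zero N hN⟩

lemma pochInf_eq_zero {x : ℂ} (N : ℕ) (h : 1 - x * p ^ N = 0) : pochInf p x = 0 := by
  have := hasProd_zero_of_eq_zero (f := fun n : ℕ => 1 - x * p ^ n) N h
  exact this.tprod_eq

lemma pochInf_ne_zero (hp1 : ‖p‖ < 1) {x : ℂ} (h : ∀ n : ℕ, 1 - x * p ^ n ≠ 0) :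
    pochInf p x ≠ 0 := by
  rw [pochInf, ← cexp_tsum_eq_tprod' h (summable_log hp1 x)]
  exact Complex.exp_ne_zero _

lemma pochInf_shift (hp1 : ‖p‖ < 1) (x : ℂ) :
    pochInf p x = (1 - x) * pochInf p (p * x) := by
  have hm : Multipliable fun n : ℕ => 1 - x * p ^ (n + 1) :=
    (multipliable_poch hp1 (p * x)).congr (fun n => by ring)
  have h1 : (∏' n : ℕ, (1 - x * p ^ n)) = (1 - x * p ^ 0) * ∏' n : ℕ, (1 - x * p ^ (n + 1)) :=
    tprod_eq_zero_mul' hm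
  rw [pochInf, h1, pow_zero, mul_one]
  congr 1
  rw [pochInf]
  exact tprod_congr fun b => by ring


lemma norm_log_one_sub_le {z : ℂ} (h : ‖z‖ ≤ 1/2) : ‖Complex.log (1 - z)‖ ≤ 3/2 * ‖z‖ := by
  rw [sub_eq_add_neg]
  simpa [norm_neg] using Complex.norm_log_one_add_half_le_self (z := -z) (by rw [norm_neg]; exact h)

lemma one_sub_ne_zero_of_norm {z : ℂ} (h : ‖z‖ < 1) : 1 - z ≠ 0 := by
  intro hz
  rw [sub_eq_zero] at hz
  rw [← hz] at h
  simp at h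

theorem differentiable_pochInf (hp1 : ‖p‖ < 1) : Differentiable ℂ (pochInf p) := by
  intro x0
  have hR : (0:ℝ) < ‖x0‖ + 1 := by positivity
  obtain ⟨N, hN⟩ := exists_small hp1 (‖x0‖ + 1) hR
  set R : ℝ := ‖x0‖ + 1 with hRdef
  have hball : x0 ∈ ball (0:ℂ) R := by
    simp only [mem_ball, dist_zero_right, hRdef]; linarith
  have key : ∀ x ∈ ball (0:ℂ) R, ∀ m : ℕ, ‖x * p ^ (m + N)‖ ≤ 1/2 * ‖p‖ ^ m := by
    intro x hx m
    rw [mem_ball, dist_zero_right] at hx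
    have : ‖x * p ^ (m + N)‖ = (‖x‖ * ‖p‖ ^ N) * ‖p‖ ^ m := by
      rw [norm_mul, norm_pow, pow_add]; ring
    rw [this]
    have h1 : ‖x‖ * ‖p‖ ^ N ≤ R * ‖p‖ ^ N :=
      mul_le_mul_of_nonneg_right (le_of_lt hx) (by positivity)
    have h2 : (0:ℝ) ≤ ‖p‖ ^ m := by positivity
    have h3 := mul_le_mul_of_nonneg_right h1 h2
    have h4 := mul_le_mul_of_nonneg_right hN h2
    exact le_trans h3 h4
  have hlt : ∀ x ∈ ball (0:ℂ) R, ∀ m : ℕ, ‖x * p ^ (m + N)‖ ≤ 1/2 := by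
    intro x hx m
    refine (key x hx m).trans ?_
    have : ‖p‖ ^ m ≤ 1 := pow_le_one₀ (norm_nonneg p) (le_of_lt (by simpa using hp1))
    nlinarith
  have hne : ∀ x ∈ ball (0:ℂ) R, ∀ m : ℕ, 1 - x * p ^ (m + N) ≠ 0 := fun x hx m =>
    one_sub_ne_zero_of_norm (lt_of_le_of_lt (hlt x hx m) (by norm_num))
  have hsummable : ∀ x ∈ ball (0:ℂ) R, Summable fun m : ℕ => Complex.log (1 - x * p ^ (m + N)) := by
    intro x hx
    apply summable_log_core hp1 x N
    have := hlt x hx 0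
    simpa [norm_mul, norm_pow] using this
  have heq : Set.EqOn (pochInf p)
      (fun x => (∏ k ∈ range N, (1 - x * p ^ k)) *
        Complex.exp (∑' m : ℕ, Complex.log (1 - x * p ^ (m + N)))) (ball 0 R) := by
    intro x hx
    have hm : Multipliable fun n : ℕ => 1 - x * p ^ (n + N) :=
      (multipliable_poch hp1 (x * p ^ N)).congr (fun n => by rw [pow_add]; ring)
    have h1 := Multipliable.prod_mul_tprod_nat_mul' (f := fun n : ℕ => 1 - x * p ^ n) (k := N) hm
    have h2 : Complex.exp (∑' m : ℕ, Complex.log (1 - x * p ^ (m + N)))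
        = ∏' m : ℕ, (1 - x * p ^ (m + N)) :=
      cexp_tsum_eq_tprod' (fun m => hne x hx m) (hsummable x hx)
    simp only
    rw [h2, pochInf]
    exact h1.symm
  have hdiff : DifferentiableOn ℂ
      (fun x => (∏ k ∈ range N, (1 - x * p ^ k)) *
        Complex.exp (∑' m : ℕ, Complex.log (1 - x * p ^ (m + N)))) (ball 0 R) := by
    apply DifferentiableOn.mul
    · apply DifferentiableOn.fun_finsetProd
      intro k _
      exact ((differentiable_const (1:ℂ)).sub (differentiable_id.mul_const _)).differentiableOn
    · apply DifferentiableOn.cexp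
      apply differentiableOn_tsum_of_summable_norm
        (u := fun m : ℕ => (3:ℝ)/2 * (1/2 * ‖p‖ ^ m))
      · apply Summable.mul_left
        apply Summable.mul_left
        exact summable_geometric_of_lt_one (norm_nonneg p) (by simpa using hp1)
      · intro m
        intro x hx
        apply DifferentiableWithinAt.clog
        · exact (((differentiable_const (1:ℂ)).sub
            (differentiable_id.mul_const _)).differentiableOn x hx)
        · rw [Complex.mem_slitPlane_iff]
          left
          have h1 : (x * p ^ (m + N)).re ≤ ‖x * p ^ (m + N)‖ := by
            simpa using Complex.re_le_norm (x * p ^ (m + N))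
          have h2 := hlt x hx m
          simp only [Complex.sub_re, Complex.one_re]
          linarith
      · exact isOpen_ball
      · intro m w hw
        calc ‖Complex.log (1 - w * p ^ (m + N))‖ ≤ 3/2 * ‖w * p ^ (m + N)‖ :=
              norm_log_one_sub_le (hlt w hw m)
          _ ≤ 3/2 * (1/2 * ‖p‖ ^ m) := by
              exact mul_le_mul_of_nonneg_left (key w hw m) (by norm_num)
  exact ((hdiff.congr heq).differentiableAt (isOpen_ball.mem_nhds hball))


lemma pochInf_p_ne_zero (hp1 : ‖p‖ < 1) : pochInf p p ≠ 0 := by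
  apply pochInf_ne_zero hp1
  intro n
  apply one_sub_ne_zero_of_norm
  have : ‖p * p ^ n‖ = ‖p‖ ^ (n + 1) := by rw [norm_mul, norm_pow, pow_succ]; ring
  rw [this]
  exact pow_lt_one₀ (norm_nonneg p) (by simpa using hp1) (Nat.succ_ne_zero n)

lemma theta_ne_zero (hp1 : ‖p‖ < 1) (hp0 : p ≠ 0) {x : ℂ} (hx : x ≠ 0)
    (h : ∀ k : ℤ, x ≠ p ^ k) : theta p x ≠ 0 := by
  apply mul_ne_zero
  · apply pochInf_ne_zero hp1
    intro n hn
    rw [sub_eq_zero] at hn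
    apply h (-(n:ℤ))
    rw [zpow_neg, zpow_natCast]
    field_simp at hn ⊢
    linear_combination -hn
  · apply pochInf_ne_zero hp1
    intro n hn
    rw [sub_eq_zero] at hn
    apply h ((n:ℤ) + 1)
    rw [zpow_add₀ hp0, zpow_natCast, zpow_one]
    field_simp at hn
    linear_combination hn

lemma theta_zpow_eq_zero (hp0 : p ≠ 0) (k : ℤ) : theta p ((p:ℂ) ^ k) = 0 := by
  rcases le_or_gt k 0 with hk | hk
  · apply mul_eq_zero_of_left
    apply pochInf_eq_zero ((-k).toNat)
    have h2 : (p:ℂ) ^ k * p ^ ((-k).toNat) = 1 := by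
      rw [← zpow_natCast p ((-k).toNat), Int.toNat_of_nonneg (by linarith), ← zpow_add₀ hp0]
      norm_num
    rw [h2, sub_self]
  · apply mul_eq_zero_of_right
    apply pochInf_eq_zero ((k - 1).toNat)
    have h1 : p / (p:ℂ) ^ k = p ^ (1 - k) := by
      rw [zpow_sub₀ hp0, zpow_one]
    have h2 : p / (p:ℂ) ^ k * p ^ ((k - 1).toNat) = 1 := by
      rw [h1, ← zpow_natCast p ((k-1).toNat), Int.toNat_of_nonneg (by linarith),
        ← zpow_add₀ hp0]
      norm_num
    rw [h2, sub_self]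

lemma theta_one_eq_zero (hp0 : p ≠ 0) : theta p 1 = 0 := by
  simpa using theta_zpow_eq_zero hp0 0

lemma theta_pmul (hp1 : ‖p‖ < 1) (hp0 : p ≠ 0) {x : ℂ} (hx : x ≠ 0) :
    theta p (p * x) = -x⁻¹ * theta p x := by
  rw [theta, theta, show p / (p * x) = x⁻¹ by field_simp, pochInf_shift hp1 x⁻¹,
    show p * x⁻¹ = p / x from (div_eq_mul_inv p x).symm, pochInf_shift hp1 x]
  have hxx : (1 : ℂ) - x⁻¹ = -x⁻¹ * (1 - x) := by field_simp; ring
  rw [hxx]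
  ring

lemma theta_inv (hp1 : ‖p‖ < 1) (hp0 : p ≠ 0) {x : ℂ} (hx : x ≠ 0) :
    theta p x⁻¹ = -x⁻¹ * theta p x := by
  rw [theta, theta, show p / x⁻¹ = p * x by field_simp, pochInf_shift hp1 x⁻¹,
    show p * x⁻¹ = p / x from (div_eq_mul_inv p x).symm, pochInf_shift hp1 x]
  have hxx : (1 : ℂ) - x⁻¹ = -x⁻¹ * (1 - x) := by field_simp; ring
  rw [hxx]
  ring

lemma theta_div_p (hp1 : ‖p‖ < 1) (hp0 : p ≠ 0) {x : ℂ} (hx : x ≠ 0) :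
    theta p (x / p) = -(x / p) * theta p x := by
  have hq : x / p ≠ 0 := div_ne_zero hx hp0
  have h := theta_pmul hp1 hp0 hq
  rw [show p * (x / p) = x by field_simp] at h
  have h2 : -(x / p) * (-(x / p)⁻¹ * theta p (x / p)) = theta p (x / p) := by
    rw [show -(x / p) * (-(x / p)⁻¹ * theta p (x / p))
        = x / p * (x / p)⁻¹ * theta p (x / p) by ring, mul_inv_cancel₀ hq, one_mul]
  rw [h, h2]

lemma differentiableAt_theta (hp1 : ‖p‖ < 1) {x : ℂ} (hx : x ≠ 0) :
    DifferentiableAt ℂ (theta p) x := by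
  show DifferentiableAt ℂ (fun x => pochInf p x * pochInf p (p / x)) x
  apply DifferentiableAt.mul
  · exact differentiable_pochInf hp1 x
  · have h0 : DifferentiableAt ℂ (fun x : ℂ => p / x) x := by
      simp only [div_eq_mul_inv]
      exact (differentiableAt_inv hx).const_mul p
    exact (differentiable_pochInf hp1 (p / x)).comp x h0

lemma deriv_theta_one_ne_zero (hp1 : ‖p‖ < 1) (hp0 : p ≠ 0) :
    deriv (theta p) 1 ≠ 0 := by
  have hfun : theta p = fun x => (1 - x) * (pochInf p (p * x) * pochInf p (p / x)) := by
    funext x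
    rw [theta, pochInf_shift hp1 x]
    ring
  have hΨ : DifferentiableAt ℂ (fun x : ℂ => pochInf p (p * x) * pochInf p (p / x)) 1 := by
    apply DifferentiableAt.mul
    · exact (differentiable_pochInf hp1 (p * 1)).comp 1
        (differentiableAt_id.const_mul p : DifferentiableAt ℂ (fun x : ℂ => p * x) 1)
    · have h0 : DifferentiableAt ℂ (fun x : ℂ => p / x) 1 := by
        simp only [div_eq_mul_inv]
        exact (differentiableAt_inv one_ne_zero).const_mul p
      exact (differentiable_pochInf hp1 (p / 1)).comp 1 h0
  have h1 : HasDerivAt (fun x : ℂ => 1 - x) (-1) 1 := by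
    simpa using (hasDerivAt_id (1:ℂ)).const_sub 1
  have h2 := h1.mul hΨ.hasDerivAt
  rw [hfun]
  rw [show (fun x : ℂ => (1 - x) * (pochInf p (p * x) * pochInf p (p / x))) =
      ((fun x : ℂ => 1 - x) * fun x => pochInf p (p * x) * pochInf p (p / x)) from rfl, h2.deriv]
  simp only [sub_self, zero_mul, add_zero, mul_one]
  have hpp : pochInf p (p * 1) * pochInf p (p / 1) ≠ 0 := by
    rw [mul_one, div_one]
    exact mul_ne_zero (pochInf_p_ne_zero hp1) (pochInf_p_ne_zero hp1)
  simpa using hpp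

lemma deriv_theta_rel (hp1 : ‖p‖ < 1) (hp0 : p ≠ 0) (k : ℤ) :
    deriv (theta p) (p ^ (k + 1)) * p = -((p:ℂ) ^ k)⁻¹ * deriv (theta p) (p ^ k) := by
  set x0 : ℂ := p ^ k with hx0def
  have hx0 : x0 ≠ 0 := zpow_ne_zero k hp0
  have hpx0 : p * x0 ≠ 0 := mul_ne_zero hp0 hx0
  have hev : (fun x : ℂ => theta p (p * x)) =ᶠ[nhds x0] fun x => -x⁻¹ * theta p x := by
    filter_upwards [isOpen_compl_singleton.mem_nhds (by simpa using hx0 :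
      x0 ∈ ({0}ᶜ : Set ℂ))] with y hy
    exact theta_pmul hp1 hp0 (by simpa using hy)
  have hinner : HasDerivAt (fun x : ℂ => p * x) p x0 := by
    simpa using (hasDerivAt_id x0).const_mul p
  have hd1 : HasDerivAt (fun x : ℂ => theta p (p * x)) (deriv (theta p) (p * x0) * p) x0 := by
    exact (differentiableAt_theta hp1 hpx0).hasDerivAt.comp x0 hinner
  have hd2 : HasDerivAt (fun x : ℂ => -x⁻¹ * theta p x)
      ((x0 ^ 2)⁻¹ * theta p x0 + (-x0⁻¹) * deriv (theta p) x0) x0 := by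
    have ha : HasDerivAt (fun x : ℂ => -x⁻¹) ((x0 ^ 2)⁻¹) x0 := by
      simpa using (hasDerivAt_inv hx0).fun_neg
    exact ha.mul (differentiableAt_theta hp1 hx0).hasDerivAt
  have hder := hev.deriv_eq
  rw [hd1.deriv, hd2.deriv] at hder
  rw [hx0def] at hder
  rw [theta_zpow_eq_zero hp0 k] at hder
  rw [show p * (p:ℂ) ^ k = p ^ (k + 1) by rw [zpow_add₀ hp0, zpow_one]; ring] at hder
  rw [hder]
  ring

lemma deriv_theta_zpow_ne_zero (hp1 : ‖p‖ < 1) (hp0 : p ≠ 0) (k : ℤ) :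
    deriv (theta p) ((p:ℂ) ^ k) ≠ 0 := by
  induction k using Int.induction_on with
  | zero => simpa using deriv_theta_one_ne_zero hp1 hp0
  | succ i hi =>
      intro h0
      apply hi
      have hrel := deriv_theta_rel hp1 hp0 i
      rw [h0, zero_mul] at hrel
      rcases mul_eq_zero.mp hrel.symm with h2 | h2
      · exact absurd (neg_eq_zero.mp h2) (inv_ne_zero (zpow_ne_zero _ hp0))
      · exact h2
  | pred i hi =>
      intro h0
      apply hi
      have := deriv_theta_rel hp1 hp0 (-(i:ℤ) - 1)
      rw [show -(i:ℤ) - 1 + 1 = -(i:ℤ) by ring] at this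
      rw [h0, mul_zero] at this
      exact mul_eq_zero.mp this |>.resolve_right hp0



variable {p : ℂ}

lemma iteratedDeriv_cmul {g : ℂ → ℂ} (hg : Differentiable ℂ g) (c : ℂ) (n : ℕ) (x : ℂ) :
    iteratedDeriv n (fun z => c * g z) x = c * iteratedDeriv n g x := by
  simp_rw [← iteratedDerivWithin_univ]
  exact iteratedDerivWithin_const_mul (Set.mem_univ x) uniqueDiffOn_univ c
    (hg.contDiff.contDiffOn.contDiffWithinAt (Set.mem_univ x))

lemma bounded_of_multiplier (hp0 : p ≠ 0) (hp1 : ‖p‖ < 1) {c : ℂ} (hc : ‖c‖ ≤ 1)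
    {G : ℂ → ℂ} (hG : DifferentiableOn ℂ G {(0:ℂ)}ᶜ)
    (heq : ∀ t : ℂ, t ≠ 0 → G (p * t) = c * G t) :
    ∃ C : ℝ, 0 ≤ C ∧ ∀ t : ℂ, t ≠ 0 → ‖t‖ ≤ 1 → ‖G t‖ ≤ C := by
  have hpnorm : (0:ℝ) < ‖p‖ := by simpa [norm_pos_iff] using hp0
  have hpnorm1 : ‖p‖ < 1 := by simpa using hp1
  set K : Set ℂ := Metric.closedBall (0:ℂ) 1 ∩ {z | ‖p‖ ≤ ‖z‖} with hKdef
  have hKmem : ∀ z : ℂ, ‖z‖ ≤ 1 → ‖p‖ ≤ ‖z‖ → z ∈ K := by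
    intro z h1 h2
    exact ⟨by simpa [Metric.mem_closedBall, dist_zero_right] using h1, h2⟩
  have hKsub : K ⊆ {(0:ℂ)}ᶜ := by
    intro z hz h0
    rw [Set.mem_singleton_iff] at h0
    subst h0
    have h2 := hz.2
    simp only [Set.mem_setOf_eq, norm_zero] at h2
    linarith
  have hKc : IsCompact K :=
    (isCompact_closedBall _ _).inter_right (isClosed_Ici.preimage continuous_norm)
  obtain ⟨C, hC⟩ := hKc.exists_bound_of_continuousOn (hG.continuousOn.mono hKsub)
  refine ⟨max C 0, le_max_right _ _, ?_⟩
  have main : ∀ m : ℕ, ∀ t : ℂ, t ≠ 0 → ‖t‖ ≤ 1 → ‖p‖ ^ m ≤ ‖t‖ → ‖G t‖ ≤ max C 0 := by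
    intro m
    induction m with
    | zero =>
        intro t ht h1 h2
        rw [pow_zero] at h2
        exact le_max_of_le_left (hC t (hKmem t h1 (hpnorm1.le.trans h2)))
    | succ m ih =>
        intro t ht h1 h2
        by_cases hK : ‖p‖ ≤ ‖t‖
        · exact le_max_of_le_left (hC t (hKmem t h1 hK))
        · push_neg at hK
          have htp : t / p ≠ 0 := div_ne_zero ht hp0
          have hn1 : ‖t / p‖ ≤ 1 := by
            rw [norm_div]
            rw [div_le_one hpnorm]
            exact hK.le
          have hn2 : ‖p‖ ^ m ≤ ‖t / p‖ := by
            rw [norm_div, le_div_iff₀ hpnorm]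
            calc ‖p‖ ^ m * ‖p‖ = ‖p‖ ^ (m + 1) := by rw [pow_succ]
              _ ≤ ‖t‖ := h2
          have hrec := heq (t / p) htp
          rw [show p * (t / p) = t by field_simp] at hrec
          rw [hrec, norm_mul]
          calc ‖c‖ * ‖G (t / p)‖ ≤ 1 * (max C 0) :=
                mul_le_mul hc (ih (t / p) htp hn1 hn2) (norm_nonneg _) zero_le_one
            _ = max C 0 := one_mul _
  intro t ht h1
  have htpos : (0:ℝ) < ‖t‖ := by simpa [norm_pos_iff] using ht
  obtain ⟨m, hm⟩ := exists_pow_lt_of_lt_one htpos hpnorm1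
  exact main m t ht h1 hm.le

lemma liouville_core (hp0 : p ≠ 0) (hp1 : ‖p‖ < 1) {c : ℂ} (hc : ‖c‖ ≤ 1)
    (hcp : ∀ m : ℕ, c ≠ p ^ m)
    {G : ℂ → ℂ} (hG : DifferentiableOn ℂ G {(0:ℂ)}ᶜ)
    (heq : ∀ t : ℂ, t ≠ 0 → G (p * t) = c * G t) :
    ∀ t : ℂ, t ≠ 0 → G t = 0 := by
  obtain ⟨C, hC0, hC⟩ := bounded_of_multiplier hp0 hp1 hc hG heq
  have hd : DifferentiableOn ℂ G (Set.univ \ {0}) := hG.mono (by intro z hz; simpa using hz.2)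
  -- little-o bound near 0
  have ho : (fun z : ℂ => G z - G 0) =o[𝓝[≠] (0:ℂ)] fun z => (z - 0)⁻¹ := by
    have hbig : (fun z : ℂ => G z - G 0) =O[𝓝[≠] (0:ℂ)] (fun _ => (1:ℝ)) := by
      rw [isBigO_iff]
      refine ⟨C + ‖G 0‖, ?_⟩
      have hball : Metric.ball (0:ℂ) 1 ∈ 𝓝 (0:ℂ) := Metric.ball_mem_nhds _ one_pos
      filter_upwards [nhdsWithin_le_nhds hball, self_mem_nhdsWithin] with z hz hz0
      have h1 : ‖G z‖ ≤ C := hC z hz0 (by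
        rw [Metric.mem_ball, dist_zero_right] at hz; exact hz.le)
      calc ‖G z - G 0‖ ≤ ‖G z‖ + ‖G 0‖ := norm_sub_le _ _
        _ ≤ C + ‖G 0‖ := by linarith
        _ ≤ (C + ‖G 0‖) * ‖(1:ℝ)‖ := by simp
    have hlit : (fun _ : ℂ => (1:ℝ)) =o[𝓝[≠] (0:ℂ)] fun z => (z - 0)⁻¹ := by
      rw [isLittleO_const_left]
      right
      have h1 : Tendsto (fun z : ℂ => ‖z‖) (𝓝[≠] (0:ℂ)) (𝓝[>] 0) := by
        rw [tendsto_nhdsWithin_iff]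
        constructor
        · have hh : Tendsto (fun z : ℂ => ‖z‖) (𝓝[≠] (0:ℂ)) (𝓝 ‖(0:ℂ)‖) :=
            (continuous_norm.tendsto 0).mono_left nhdsWithin_le_nhds
          simpa using hh
        · filter_upwards [self_mem_nhdsWithin] with z hz
          simpa [norm_pos_iff] using hz
      have h2 := tendsto_inv_nhdsGT_zero.comp h1
      apply h2.congr
      intro z
      simp [norm_inv]
    exact hbig.trans_isLittleO hlit
  set g : ℂ → ℂ := Function.update G 0 (limUnder (𝓝[≠] (0:ℂ)) G) with hgdef
  have hgdiff : DifferentiableOn ℂ g Set.univ :=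
    Complex.differentiableOn_update_limUnder_of_isLittleO univ_mem hd ho
  have hgd : Differentiable ℂ g := by rwa [← differentiableOn_univ]
  have hg_eq : ∀ t : ℂ, t ≠ 0 → g t = G t := fun t ht => Function.update_of_ne ht _ _
  have hfeq : ∀ t : ℂ, g (p * t) = c * g t := by
    intro t
    rcases eq_or_ne t 0 with rfl | ht
    · have hΦ : ContinuousAt (fun s : ℂ => g (p * s)) 0 :=
        (hgd.continuous.comp (continuous_const.mul continuous_id)).continuousAt
      have hΨ : ContinuousAt (fun s : ℂ => c * g s) 0 :=
        (continuous_const.mul hgd.continuous).continuousAt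
      have hagree : (fun s : ℂ => g (p * s)) =ᶠ[𝓝[≠] (0:ℂ)] fun s => c * g s := by
        filter_upwards [self_mem_nhdsWithin] with s hs
        have hs0 : s ≠ 0 := hs
        rw [hg_eq _ (mul_ne_zero hp0 hs0), hg_eq _ hs0, heq s hs0]
      have := tendsto_nhds_unique
        ((hΦ.tendsto).mono_left nhdsWithin_le_nhds)
        (((hΨ.tendsto).mono_left nhdsWithin_le_nhds).congr' hagree.symm)
      simpa using this
    · rw [hg_eq _ (mul_ne_zero hp0 ht), hg_eq _ ht]
      exact heq t ht
  have hder : ∀ m : ℕ, iteratedDeriv m g 0 = 0 := by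
    intro m
    have h1 : iteratedDeriv m (fun x => g (p * x)) = fun x => p ^ m * iteratedDeriv m g (p * x) :=
      iteratedDeriv_comp_const_mul hgd.contDiff p
    have h2 : (fun x : ℂ => g (p * x)) = fun x => c * g x := funext hfeq
    have h3 := congrFun (h2 ▸ h1) 0
    rw [iteratedDeriv_cmul hgd c m 0] at h3
    rw [mul_zero] at h3
    have h4 : (p ^ m - c) * iteratedDeriv m g 0 = 0 := by linear_combination -h3
    rcases mul_eq_zero.mp h4 with h5 | h5
    · exact absurd (sub_eq_zero.mp h5).symm (hcp m)
    · exact h5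
  have hzero : ∀ z : ℂ, g z = 0 := by
    intro z
    have ht := taylorSeries_eq_of_entire' (0:ℂ) z hgd
    simp only [hder, mul_zero, zero_mul, tsum_zero] at ht
    exact ht.symm
  intro t ht
  rw [← hg_eq t ht]
  exact hzero t

lemma liouville (hp0 : p ≠ 0) (hp1 : ‖p‖ < 1) {c : ℂ} (hc0 : c ≠ 0)
    (hck : ∀ k : ℤ, c ≠ p ^ k)
    {G : ℂ → ℂ} (hG : DifferentiableOn ℂ G {(0:ℂ)}ᶜ)
    (heq : ∀ t : ℂ, t ≠ 0 → G (p * t) = c * G t) :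
    ∀ t : ℂ, t ≠ 0 → G t = 0 := by
  rcases le_or_gt ‖c‖ 1 with hle | hgt
  · exact liouville_core hp0 hp1 hle
      (fun m h => hck (m : ℤ) (by rw [h, zpow_natCast])) hG heq
  · set H : ℂ → ℂ := fun t => G t⁻¹ with hHdef
    have hH : DifferentiableOn ℂ H {(0:ℂ)}ᶜ := by
      intro t ht
      have ht0 : t ≠ 0 := ht
      have h1 : DifferentiableAt ℂ G t⁻¹ :=
        hG.differentiableAt (isOpen_compl_singleton.mem_nhds (by
          simpa using inv_ne_zero ht0))
      exact (h1.comp t (differentiableAt_inv ht0)).differentiableWithinAt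
    have hHeq : ∀ t : ℂ, t ≠ 0 → H (p * t) = c⁻¹ * H t := by
      intro t ht
      have hpt : (p * t)⁻¹ ≠ 0 := inv_ne_zero (mul_ne_zero hp0 ht)
      have h1 := heq ((p * t)⁻¹) hpt
      rw [show p * (p * t)⁻¹ = t⁻¹ by field_simp] at h1
      show G (p * t)⁻¹ = c⁻¹ * G t⁻¹
      rw [h1]
      field_simp
    have hinv1 : ‖c⁻¹‖ ≤ 1 := by
      rw [norm_inv]
      rw [inv_le_one_iff₀]
      right; exact hgt.le
    have hinvp : ∀ m : ℕ, c⁻¹ ≠ p ^ m := by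
      intro m h
      apply hck (-(m:ℤ))
      rw [zpow_neg, zpow_natCast, ← h, inv_inv]
    have hHzero := liouville_core hp0 hp1 hinv1 hinvp hH hHeq
    intro t ht
    have := hHzero t⁻¹ (inv_ne_zero ht)
    simpa [hHdef, inv_inv] using this


end EPF

/-- Elliptic partial fraction expansion (Rosengren): for `0 < |p| < 1`, `n ≥ 1`,
nonzero `a₁,…,a_n`, `b₁,…,b_{n+1}`, `t` with `a₁⋯a_n · t = b₁⋯b_{n+1}` and the
generic-position assumptions, one has
`∏_s θ_p(b_s/t)/θ_p(a_s/t)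
 = θ_p(b_{n+1}/t)⁻¹ ∑_i θ_p(a_i/b_{n+1})/θ_p(a_i/t) · ∏_s θ_p(a_i/b_s) / ∏_{s≠i} θ_p(a_i/a_s)`. -/
theorem elliptic_partial_fraction (p : ℂ) (hp0 : 0 < ‖p‖)
    (hp1 : ‖p‖ < 1) (n : ℕ) (hn : 1 ≤ n)
    (a : Fin n → ℂ) (b : Fin (n + 1) → ℂ) (t : ℂ)
    (ha : ∀ i, a i ≠ 0) (hb : ∀ j, b j ≠ 0) (ht : t ≠ 0)
    (hbal : (∏ i, a i) * t = ∏ j, b j)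
    (hat : ∀ i, ∀ k : ℤ, a i / t ≠ p ^ k)
    (haa : ∀ i s, i ≠ s → ∀ k : ℤ, a i / a s ≠ p ^ k)
    (hbt : ∀ k : ℤ, b (Fin.last n) / t ≠ p ^ k) :
    ∏ s : Fin n, theta p (b s.castSucc / t) / theta p (a s / t)
      = (1 / theta p (b (Fin.last n) / t)) *
        ∑ i : Fin n, theta p (a i / b (Fin.last n)) / theta p (a i / t) *
          (∏ s : Fin n, theta p (a i / b s.castSucc)) /
          (∏ s ∈ Finset.univ.erase i, theta p (a i / a s)) := by
  classical
  have hp0' : p ≠ 0 := by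
    intro h; rw [h] at hp0; simp at hp0
  set c : ℂ := b (Fin.last n) / t with hcdef
  have hc0 : c ≠ 0 := div_ne_zero (hb _) ht
  have hck : ∀ k : ℤ, c ≠ p ^ k := hbt
  have hct : c * t = b (Fin.last n) := by rw [hcdef]; field_simp
  have hbal2 : (∏ i, a i) = c * ∏ s : Fin n, b s.castSucc := by
    have h1 : ∏ j, b j = (∏ s : Fin n, b s.castSucc) * b (Fin.last n) :=
      Fin.prod_univ_castSucc b
    apply mul_right_cancel₀ ht
    rw [hbal, h1, ← hct]
    ring
  clear_value c
  -- nonvanishing of various theta values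
  have hθaa : ∀ i : Fin n, (∏ s ∈ Finset.univ.erase i, theta p (a i / a s)) ≠ 0 := by
    intro i
    rw [Finset.prod_ne_zero_iff]
    intro s hs
    exact EPF.theta_ne_zero hp1 hp0' (div_ne_zero (ha i) (ha s))
      (haa i s (Ne.symm (Finset.mem_erase.mp hs).1))
  have hθat : ∀ i, theta p (a i / t) ≠ 0 := fun i =>
    EPF.theta_ne_zero hp1 hp0' (div_ne_zero (ha i) ht) (hat i)
  have hθc : theta p c ≠ 0 := EPF.theta_ne_zero hp1 hp0' hc0 hck
  -- main objects
  set K : Fin n → ℂ := fun i => (∏ s : Fin n, theta p (a i / b s.castSucc)) /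
    (∏ s ∈ Finset.univ.erase i, theta p (a i / a s)) with hKdef
  set F : ℂ → ℂ := fun u => theta p c * ∏ s : Fin n, theta p (b s.castSucc / u) -
    ∑ i : Fin n, K i * theta p (a i / (c * u)) *
      ∏ s ∈ Finset.univ.erase i, theta p (a s / u) with hFdef
  set D : ℂ → ℂ := fun u => ∏ s : Fin n, theta p (a s / u) with hDdef
  set Λ : ℂ → ℂ := fun u => ∏ s : Fin n, (-(b s.castSucc / u / p)) with hΛdef
  have hΛne : ∀ u : ℂ, u ≠ 0 → Λ u ≠ 0 := by
    intro u hu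
    rw [hΛdef]
    rw [Finset.prod_ne_zero_iff]
    intro s _
    exact neg_ne_zero.mpr (div_ne_zero (div_ne_zero (hb _) hu) hp0')
  -- differentiability
  have hdiv_diff : ∀ x : ℂ, x ≠ 0 → ∀ u : ℂ, u ≠ 0 →
      DifferentiableAt ℂ (fun v => theta p (x / v)) u := by
    intro x hx u hu
    have hinner : DifferentiableAt ℂ (fun v : ℂ => x / v) u := by
      simp only [div_eq_mul_inv]
      exact (differentiableAt_inv hu).const_mul x
    exact (EPF.differentiableAt_theta hp1 (div_ne_zero hx hu)).comp u hinner
  have hFdiff : DifferentiableOn ℂ F {(0:ℂ)}ᶜ := by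
    intro u hu
    have hu0 : u ≠ 0 := hu
    apply DifferentiableAt.differentiableWithinAt
    apply DifferentiableAt.sub
    · apply DifferentiableAt.const_mul
      apply DifferentiableAt.fun_finsetProd
      intro s _
      exact hdiv_diff _ (hb _) u hu0
    · apply DifferentiableAt.fun_sum
      intro i _
      apply DifferentiableAt.mul
      · apply DifferentiableAt.const_mul
        have hrw : (fun u : ℂ => theta p (a i / (c * u))) =
            fun u : ℂ => theta p ((a i / c) / u) := by
          funext v
          rw [div_div]
        rw [hrw]
        exact hdiv_diff _ (div_ne_zero (ha i) hc0) u hu0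
      · apply DifferentiableAt.fun_finsetProd
        intro s _
        exact hdiv_diff _ (ha s) u hu0
  have hDdiff : DifferentiableOn ℂ D {(0:ℂ)}ᶜ := by
    intro u hu
    have hu0 : u ≠ 0 := hu
    apply DifferentiableAt.differentiableWithinAt
    apply DifferentiableAt.fun_finsetProd
    intro s _
    exact hdiv_diff _ (ha s) u hu0
  -- the key scalar identity
  have hscal : ∀ u : ℂ, u ≠ 0 → (∏ s : Fin n, (-(a s / u / p))) = c * Λ u := by
    intro u hu
    calc ∏ s : Fin n, (-(a s / u / p)) = ∏ s : Fin n, ((-1 / (u * p)) * a s) :=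
          Finset.prod_congr rfl (fun s _ => by first | (field_simp; ring) | field_simp)
      _ = (∏ _s : Fin n, ((-1 : ℂ) / (u * p))) * ∏ s, a s := Finset.prod_mul_distrib
      _ = (∏ _s : Fin n, ((-1 : ℂ) / (u * p))) * (c * ∏ s : Fin n, b s.castSucc) := by
          rw [hbal2]
      _ = c * ((∏ _s : Fin n, ((-1 : ℂ) / (u * p))) * ∏ s : Fin n, b s.castSucc) := by ring
      _ = c * ∏ s : Fin n, ((-1 / (u * p)) * b s.castSucc) := by rw [Finset.prod_mul_distrib]
      _ = c * Λ u := by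
          rw [hΛdef]
          congr 1
          exact Finset.prod_congr rfl (fun s _ => by first | (field_simp; ring) | field_simp)
  -- functional equations
  have hDmul : ∀ u : ℂ, u ≠ 0 → D (p * u) = (c * Λ u) * D u := by
    intro u hu
    have h1 : ∀ s : Fin n, theta p (a s / (p * u)) = (-(a s / u / p)) * theta p (a s / u) := by
      intro s
      rw [show a s / (p * u) = (a s / u) / p by rw [div_div, mul_comm u p],
        EPF.theta_div_p hp1 hp0' (div_ne_zero (ha s) hu)]
    calc D (p * u) = ∏ s : Fin n, ((-(a s / u / p)) * theta p (a s / u)) :=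
          Finset.prod_congr rfl (fun s _ => h1 s)
      _ = (∏ s : Fin n, (-(a s / u / p))) * ∏ s : Fin n, theta p (a s / u) :=
          Finset.prod_mul_distrib
      _ = (c * Λ u) * D u := by rw [hscal u hu]
  have hFmul : ∀ u : ℂ, u ≠ 0 → F (p * u) = Λ u * F u := by
    intro u hu
    have hterm1 : (∏ s : Fin n, theta p (b s.castSucc / (p * u)))
        = Λ u * ∏ s : Fin n, theta p (b s.castSucc / u) := by
      calc ∏ s : Fin n, theta p (b s.castSucc / (p * u))
          = ∏ s : Fin n, ((-(b s.castSucc / u / p)) * theta p (b s.castSucc / u)) :=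
            Finset.prod_congr rfl (fun s _ => by
              rw [show b s.castSucc / (p * u) = (b s.castSucc / u) / p by
                  rw [div_div, mul_comm u p],
                EPF.theta_div_p hp1 hp0' (div_ne_zero (hb _) hu)])
        _ = Λ u * ∏ s : Fin n, theta p (b s.castSucc / u) := by
            rw [Finset.prod_mul_distrib, hΛdef]
    have hterm2 : ∀ i : Fin n,
        K i * theta p (a i / (c * (p * u))) *
          ∏ s ∈ Finset.univ.erase i, theta p (a s / (p * u))
        = Λ u * (K i * theta p (a i / (c * u)) *
            ∏ s ∈ Finset.univ.erase i, theta p (a s / u)) := by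
      intro i
      have e1 : theta p (a i / (c * (p * u)))
          = (-(a i / (c * u) / p)) * theta p (a i / (c * u)) := by
        rw [show a i / (c * (p * u)) = (a i / (c * u)) / p by
            rw [div_div, mul_assoc, mul_comm u p],
          EPF.theta_div_p hp1 hp0' (div_ne_zero (ha i) (mul_ne_zero hc0 hu))]
      have e2 : ∏ s ∈ Finset.univ.erase i, theta p (a s / (p * u))
          = (∏ s ∈ Finset.univ.erase i, (-(a s / u / p))) *
            ∏ s ∈ Finset.univ.erase i, theta p (a s / u) := by
        rw [← Finset.prod_mul_distrib]
        exact Finset.prod_congr rfl (fun s _ => by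
          rw [show a s / (p * u) = (a s / u) / p by rw [div_div, mul_comm u p],
            EPF.theta_div_p hp1 hp0' (div_ne_zero (ha s) hu)])
      have e3 : (-(a i / (c * u) / p)) * (∏ s ∈ Finset.univ.erase i, (-(a s / u / p)))
          = Λ u := by
        have h4 : (-(a i / u / p)) * (∏ s ∈ Finset.univ.erase i, (-(a s / u / p)))
            = ∏ s : Fin n, (-(a s / u / p)) :=
          Finset.mul_prod_erase Finset.univ (fun s => -(a s / u / p)) (Finset.mem_univ i)
        have h5 : (-(a i / (c * u) / p)) = c⁻¹ * (-(a i / u / p)) := by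
          field_simp
        rw [h5, mul_assoc, h4, hscal u hu, inv_mul_cancel_left₀ hc0]
      rw [e1, e2, ← e3]
      ring
    calc F (p * u) = theta p c * (Λ u * ∏ s : Fin n, theta p (b s.castSucc / u)) -
          ∑ i : Fin n, Λ u * (K i * theta p (a i / (c * u)) *
            ∏ s ∈ Finset.univ.erase i, theta p (a s / u)) := by
          rw [hFdef]
          simp only
          rw [hterm1]
          congr 1
          exact Finset.sum_congr rfl (fun i _ => hterm2 i)
      _ = Λ u * F u := by
          rw [hFdef]
          simp only
          rw [← Finset.mul_sum]
          ring
  -- F vanishes at the points a i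
  have hFa : ∀ i : Fin n, F (a i) = 0 := by
    intro i
    rw [hFdef]
    simp only
    rw [sub_eq_zero]
    rw [Finset.sum_eq_single i]
    · -- main identity at i
      have hprodB : ∏ s : Fin n, theta p (b s.castSucc / a i)
          = (∏ s : Fin n, (-(b s.castSucc / a i))) *
            ∏ s : Fin n, theta p (a i / b s.castSucc) := by
        rw [← Finset.prod_mul_distrib]
        apply Finset.prod_congr rfl
        intro s _
        have hx : a i / b s.castSucc ≠ 0 := div_ne_zero (ha i) (hb _)
        rw [show b s.castSucc / a i = (a i / b s.castSucc)⁻¹ by rw [inv_div],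
          EPF.theta_inv hp1 hp0' hx, inv_div]
      have hprodA : ∏ s ∈ Finset.univ.erase i, theta p (a s / a i)
          = (∏ s ∈ Finset.univ.erase i, (-(a s / a i))) *
            ∏ s ∈ Finset.univ.erase i, theta p (a i / a s) := by
        rw [← Finset.prod_mul_distrib]
        apply Finset.prod_congr rfl
        intro s _
        have hx : a i / a s ≠ 0 := div_ne_zero (ha i) (ha s)
        rw [show a s / a i = (a i / a s)⁻¹ by rw [inv_div],
          EPF.theta_inv hp1 hp0' hx, inv_div]
      have hinvc : theta p (a i / (c * a i)) = -c⁻¹ * theta p c := by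
        rw [show a i / (c * a i) = c⁻¹ by
          rw [mul_comm c (a i), ← div_div, div_self (ha i), one_div],
          EPF.theta_inv hp1 hp0' hc0]
      have hA : ∏ s : Fin n, (-(a s / a i)) =
          (∏ _s : Fin n, ((-1 : ℂ) / a i)) * ∏ s, a s := by
        rw [← Finset.prod_mul_distrib]
        exact Finset.prod_congr rfl (fun s _ => by field_simp)
      have hB : ∏ s : Fin n, (-(b s.castSucc / a i)) =
          (∏ _s : Fin n, ((-1 : ℂ) / a i)) * ∏ s : Fin n, b s.castSucc := by
        rw [← Finset.prod_mul_distrib]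
        exact Finset.prod_congr rfl (fun s _ => by field_simp)
      have hscal2 : (∏ s : Fin n, (-(b s.castSucc / a i)))
          = c⁻¹ * ∏ s : Fin n, (-(a s / a i)) := by
        rw [hB, hA, hbal2]
        rw [show (∏ _s : Fin n, ((-1 : ℂ) / a i)) * (c * ∏ s : Fin n, b s.castSucc)
            = c * ((∏ _s : Fin n, ((-1 : ℂ) / a i)) * ∏ s : Fin n, b s.castSucc) by ring,
          inv_mul_cancel_left₀ hc0]
      have herase : ∏ s ∈ Finset.univ.erase i, (-(a s / a i))
          = -(∏ s : Fin n, (-(a s / a i))) := by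
        have h := Finset.mul_prod_erase Finset.univ (fun s => -(a s / a i))
          (Finset.mem_univ i)
        simp only [div_self (ha i)] at h
        linear_combination -h
      have hKA : K i * ∏ s ∈ Finset.univ.erase i, theta p (a i / a s)
          = ∏ s : Fin n, theta p (a i / b s.castSucc) := by
        rw [hKdef]
        exact div_mul_cancel₀ _ (hθaa i)
      rw [hprodB, hprodA, hinvc, herase, hscal2]
      linear_combination (-(c⁻¹ * theta p c * (∏ s : Fin n, (-(a s / a i))))) * hKA
    · intro j _ hj
      have hzero : theta p (a i / a i) = 0 := by
        rw [div_self (ha i)]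
        exact EPF.theta_one_eq_zero hp0'
      rw [Finset.prod_eq_zero (Finset.mem_erase.mpr ⟨Ne.symm hj, Finset.mem_univ i⟩) hzero,
        mul_zero]
    · intro hi
      exact absurd (Finset.mem_univ i) hi
  -- F vanishes on the whole orbit of each a i
  have hFz : ∀ i : Fin n, ∀ k : ℤ, F (a i * p ^ k) = 0 := by
    intro i k
    induction k using Int.induction_on with
    | zero => simpa using hFa i
    | succ m ih =>
        have hne : a i * p ^ (m : ℤ) ≠ 0 := mul_ne_zero (ha i) (zpow_ne_zero _ hp0')
        have h2 := hFmul (a i * p ^ (m : ℤ)) hne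
        rw [ih, mul_zero] at h2
        rw [show a i * p ^ ((m : ℤ) + 1) = p * (a i * p ^ (m : ℤ)) by
          rw [zpow_add₀ hp0', zpow_one]; ring]
        exact h2
    | pred m ih =>
        have hne : a i * p ^ (-(m : ℤ) - 1) ≠ 0 := mul_ne_zero (ha i) (zpow_ne_zero _ hp0')
        have h2 := hFmul (a i * p ^ (-(m : ℤ) - 1)) hne
        rw [show p * (a i * p ^ (-(m : ℤ) - 1)) = a i * p ^ (-(m : ℤ)) by
          rw [show -(m : ℤ) = (-(m : ℤ) - 1) + 1 by ring, zpow_add₀ hp0', zpow_one]; ring]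
          at h2
        rw [ih] at h2
        rcases mul_eq_zero.mp h2.symm with h3 | h3
        · exact absurd h3 (hΛne _ hne)
        · exact h3
  -- characterization of zeros of D
  have hDzero_char : ∀ u : ℂ, u ≠ 0 → D u = 0 → (F u = 0 ∧ deriv D u ≠ 0) := by
    intro u hu hDz
    have hDz' : (∏ s : Fin n, theta p (a s / u)) = 0 := hDz
    obtain ⟨i, _, hθi⟩ := Finset.prod_eq_zero_iff.mp hDz'
    have hk : ∃ k : ℤ, a i / u = p ^ k := by
      by_contra hno
      push_neg at hno
      exact EPF.theta_ne_zero hp1 hp0' (div_ne_zero (ha i) hu) hno hθi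
    obtain ⟨k, hk⟩ := hk
    have hk2 : a i = p ^ k * u := by
      rw [div_eq_iff hu] at hk
      exact hk
    have hu_eq : u = a i * p ^ (-k) := by
      rw [hk2, zpow_neg, mul_comm ((p:ℂ) ^ k) u, mul_assoc,
        mul_inv_cancel₀ (zpow_ne_zero k hp0'), mul_one]
    constructor
    · rw [hu_eq]
      exact hFz i (-k)
    · -- simple zero of D
      have hRu : (∏ s ∈ Finset.univ.erase i, theta p (a s / u)) ≠ 0 := by
        rw [Finset.prod_ne_zero_iff]
        intro s hs
        apply EPF.theta_ne_zero hp1 hp0' (div_ne_zero (ha s) hu)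
        intro m hm
        apply haa s i (Finset.mem_erase.mp hs).1 (m - k)
        have hdd : a s / a i = (a s / u) / (a i / u) := by
          rw [eq_div_iff (div_ne_zero (ha i) hu), div_mul_div_comm, mul_comm (a s) (a i),
            mul_div_mul_left _ _ (ha i)]
        rw [hdd, hm, hk, ← zpow_sub₀ hp0']
      have hinner : HasDerivAt (fun v : ℂ => a i / v) (-(a i) / u ^ 2) u := by
        have h0 := (hasDerivAt_inv hu).const_mul (a i)
        have : (fun v : ℂ => a i * v⁻¹) = fun v : ℂ => a i / v := by
          funext v; rw [div_eq_mul_inv]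
        rw [this] at h0
        rw [show -(a i) / u ^ 2 = a i * -(u ^ 2)⁻¹ by ring]
        exact h0
      have houter := (EPF.differentiableAt_theta hp1 (div_ne_zero (ha i) hu)).hasDerivAt
      have hcomp := houter.comp u hinner
      have hRd : DifferentiableAt ℂ (fun v => ∏ s ∈ Finset.univ.erase i, theta p (a s / v)) u :=
        DifferentiableAt.fun_finsetProd (fun s _ => hdiv_diff _ (ha s) u hu)
      have hDfact : D = fun v => theta p (a i / v) *
          ∏ s ∈ Finset.univ.erase i, theta p (a s / v) := by
        funext v
        rw [hDdef]
        exact (Finset.mul_prod_erase Finset.univ _ (Finset.mem_univ i)).symm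
      have hDd : HasDerivAt D
          (deriv (theta p) (a i / u) * (-(a i) / u ^ 2) *
            (∏ s ∈ Finset.univ.erase i, theta p (a s / u)) +
           theta p (a i / u) * deriv (fun v => ∏ s ∈ Finset.univ.erase i, theta p (a s / v)) u)
          u := by
        rw [hDfact]
        exact hcomp.mul hRd.hasDerivAt
      rw [hDd.deriv, hθi, zero_mul, add_zero]
      apply mul_ne_zero
      apply mul_ne_zero
      · rw [hk]
        exact EPF.deriv_theta_zpow_ne_zero hp1 hp0' k
      · exact div_ne_zero (neg_ne_zero.mpr (ha i)) (pow_ne_zero 2 hu)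
      · exact hRu
  -- the quotient function G
  set G : ℂ → ℂ := fun u => if D u = 0 then deriv F u / deriv D u else F u / D u with hGdef
  have hop : IsOpen ({(0:ℂ)}ᶜ : Set ℂ) := isOpen_compl_singleton
  have hpre : IsPreconnected ({(0:ℂ)}ᶜ : Set ℂ) :=
    (isConnected_compl_singleton_of_one_lt_rank
      (by rw [rank_real_complex]; norm_num) (0:ℂ)).isPreconnected
  have htmem : t ∈ ({(0:ℂ)}ᶜ : Set ℂ) := ht
  have hDt : D t ≠ 0 := by
    rw [hDdef]
    exact Finset.prod_ne_zero_iff.mpr (fun s _ => hθat s)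
  have hDanal : AnalyticOnNhd ℂ D {(0:ℂ)}ᶜ := hDdiff.analyticOnNhd hop
  have hev_ne : ∀ z : ℂ, z ≠ 0 → ∀ᶠ u in 𝓝[≠] z, D u ≠ 0 := by
    intro z hz
    rcases (hDanal z hz).eventually_eq_zero_or_eventually_ne_zero with h | h
    · exfalso
      exact hDt (hDanal.eqOn_zero_of_preconnected_of_eventuallyEq_zero hpre hz h htmem)
    · exact h
  have hGdiff : DifferentiableOn ℂ G {(0:ℂ)}ᶜ := by
    intro z hz
    have hz0 : z ≠ 0 := hz
    have hmem : ({(0:ℂ)}ᶜ : Set ℂ) ∈ 𝓝 z := hop.mem_nhds hz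
    by_cases hDz : D z = 0
    · obtain ⟨hFz0, hdD⟩ := hDzero_char z hz0 hDz
      have hds1 : DifferentiableOn ℂ (dslope F z) {(0:ℂ)}ᶜ :=
        (differentiableOn_dslope hmem).mpr hFdiff
      have hds2 : DifferentiableOn ℂ (dslope D z) {(0:ℂ)}ᶜ :=
        (differentiableOn_dslope hmem).mpr hDdiff
      have hQd : DifferentiableAt ℂ (fun u => dslope F z u / dslope D z u) z := by
        apply DifferentiableAt.div (hds1.differentiableAt hmem) (hds2.differentiableAt hmem)
        rw [dslope_same]
        exact hdD
      have hGeq : G =ᶠ[𝓝 z] fun u => dslope F z u / dslope D z u := by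
        have hev2 := hev_ne z hz0
        rw [eventually_nhdsWithin_iff] at hev2
        filter_upwards [hev2] with u hu
        rcases eq_or_ne u z with rfl | huz
        · rw [hGdef]
          simp only [if_pos hDz, dslope_same]
        · have hDu : D u ≠ 0 := hu huz
          rw [hGdef]
          simp only [if_neg hDu]
          rw [dslope_of_ne F huz, dslope_of_ne D huz, slope_def_field, slope_def_field,
            hFz0, hDz, sub_zero, sub_zero]
          have hne2 : u - z ≠ 0 := sub_ne_zero.mpr huz
          field_simp
      exact (hGeq.differentiableAt_iff.mpr hQd).differentiableWithinAt
    · have hev : ∀ᶠ u in 𝓝 z, D u ≠ 0 :=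
        (hDdiff.differentiableAt hmem).continuousAt.eventually_ne hDz
      have hGeq : G =ᶠ[𝓝 z] fun u => F u / D u := by
        filter_upwards [hev] with u hu
        rw [hGdef]
        simp only [if_neg hu]
      have hFDd : DifferentiableAt ℂ (fun u => F u / D u) z :=
        (hFdiff.differentiableAt hmem).div (hDdiff.differentiableAt hmem) hDz
      exact (hGeq.differentiableAt_iff.mpr hFDd).differentiableWithinAt
  -- functional equation for G
  have hGmulS : ∀ u : ℂ, u ≠ 0 → D u ≠ 0 → D (p * u) ≠ 0 → G (p * u) = c⁻¹ * G u := by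
    intro u hu hD1 hD2
    rw [hGdef]
    simp only [if_neg hD2, if_neg hD1]
    rw [hFmul u hu, hDmul u hu]
    have hΛ := hΛne u hu
    field_simp
  have hGmul : ∀ u : ℂ, u ≠ 0 → G (p * u) = c⁻¹ * G u := by
    intro z hz
    have hpz : p * z ≠ 0 := mul_ne_zero hp0' hz
    have hc1 : ContinuousAt (fun u : ℂ => G (p * u)) z :=
      ((hGdiff.differentiableAt (hop.mem_nhds hpz)).continuousAt).comp
        ((continuous_const.mul continuous_id).continuousAt)
    have hc2 : ContinuousAt (fun u : ℂ => c⁻¹ * G u) z :=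
      continuousAt_const.mul (hGdiff.differentiableAt (hop.mem_nhds hz)).continuousAt
    have hev1 := hev_ne z hz
    have hev2 : ∀ᶠ u in 𝓝[≠] z, D (p * u) ≠ 0 := by
      have h3 := hev_ne (p * z) hpz
      have hmap : Tendsto (fun u : ℂ => p * u) (𝓝[≠] z) (𝓝[≠] (p * z)) := by
        rw [tendsto_nhdsWithin_iff]
        constructor
        · exact ((continuous_const.mul continuous_id).tendsto z).mono_left nhdsWithin_le_nhds
        · filter_upwards [self_mem_nhdsWithin] with u hu
          intro hP
          exact hu (mul_left_cancel₀ hp0' hP)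
      exact hmap.eventually h3
    have hev3 : ∀ᶠ u in 𝓝[≠] z, u ≠ 0 := by
      filter_upwards [nhdsWithin_le_nhds (hop.mem_nhds hz)] with u hu
      exact hu
    have hagree : (fun u : ℂ => G (p * u)) =ᶠ[𝓝[≠] z] fun u => c⁻¹ * G u := by
      filter_upwards [hev1, hev2, hev3] with u h1 h2 h3
      exact hGmulS u h3 h1 h2
    have := tendsto_nhds_unique
      ((hc1.tendsto).mono_left nhdsWithin_le_nhds)
      (((hc2.tendsto).mono_left nhdsWithin_le_nhds).congr' hagree.symm)
    simpa using this
  -- Liouville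
  have hcinvk : ∀ k : ℤ, c⁻¹ ≠ p ^ k := by
    intro k h
    apply hck (-k)
    rw [zpow_neg, ← h, inv_inv]
  have hG0 := EPF.liouville hp0' hp1 (inv_ne_zero hc0) hcinvk hGdiff hGmul
  have hFt : F t = 0 := by
    have h1 := hG0 t ht
    rw [hGdef] at h1
    simp only [if_neg hDt] at h1
    exact (div_eq_zero_iff.mp h1).resolve_right hDt
  -- final algebra
  have key : theta p c * ∏ s : Fin n, theta p (b s.castSucc / t)
      = ∑ i : Fin n, K i * theta p (a i / (c * t)) *
          ∏ s ∈ Finset.univ.erase i, theta p (a s / t) := by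
    have h2 : theta p c * (∏ s : Fin n, theta p (b s.castSucc / t)) -
        ∑ i : Fin n, K i * theta p (a i / (c * t)) *
          ∏ s ∈ Finset.univ.erase i, theta p (a s / t) = 0 := hFt
    rw [sub_eq_zero] at h2
    exact h2
  rw [Finset.prod_div_distrib]
  have hDt' : (∏ s : Fin n, theta p (a s / t)) ≠ 0 := hDt
  rw [div_eq_iff hDt']
  apply mul_left_cancel₀ hθc
  rw [key]
  rw [show theta p c * ((1 / theta p c) *
      (∑ i : Fin n, theta p (a i / b (Fin.last n)) / theta p (a i / t) *
        (∏ s : Fin n, theta p (a i / b s.castSucc)) /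
        (∏ s ∈ Finset.univ.erase i, theta p (a i / a s))) *
      (∏ s : Fin n, theta p (a s / t)))
      = (∑ i : Fin n, theta p (a i / b (Fin.last n)) / theta p (a i / t) *
        (∏ s : Fin n, theta p (a i / b s.castSucc)) /
        (∏ s ∈ Finset.univ.erase i, theta p (a i / a s))) *
      (∏ s : Fin n, theta p (a s / t)) by
    field_simp]
  rw [Finset.sum_mul]
  apply Finset.sum_congr rfl
  intro i _
  rw [hct]
  have hsplit : ∏ s : Fin n, theta p (a s / t)
      = theta p (a i / t) * ∏ s ∈ Finset.univ.erase i, theta p (a s / t) :=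
    (Finset.mul_prod_erase Finset.univ (fun s => theta p (a s / t))
      (Finset.mem_univ i)).symm
  rw [hsplit]
  have hid : ∀ X Y P E Q : ℂ, Y ≠ 0 → E ≠ 0 →
      X / Y * P / E * (Y * Q) = X * (P / E) * Q := by
    intro X Y P E Q hY hE
    field_simp
  rw [hid _ _ _ _ _ (hθat i) (hθaa i)]
  have hKi : K i = (∏ s : Fin n, theta p (a i / b s.castSucc)) /
      (∏ s ∈ Finset.univ.erase i, theta p (a i / a s)) := rfl
  rw [hKi]
  ring
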